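/- Let {M_j}_{j∈S} be a finite family of Hermitian complex matrices (all of the same size) that are mutually orthogonal in the sense that M_j M_k = 0 whenever j ≠ k. Then ‖Σ_{j∈S} M_j‖₁ = Σ_{j∈S} ‖M_j‖₁. -/

import Mathlib

open scoped Kronecker ComplexOrder
open Matrix

/-- The positive semidefinite square root of a positive semidefinite matrix
(junk value `0` on matrices that are not positive semidefinite). -/
noncomputable def psdSqrt {n : Type*} [Fintype n] [DecidableEq n] (A : Matrix n n ℂ) :
    Matrix n n ℂ :=
  letI := Classical.propDecidable A.PosSemidef
  if h : A.PosSemidef then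
    (h.1.eigenvectorUnitary : Matrix n n ℂ) *
      Matrix.diagonal ((↑) ∘ (Real.sqrt ∘ h.1.eigenvalues)) *
      (star h.1.eigenvectorUnitary : Matrix n n ℂ) else 0

/-- The trace norm `‖A‖₁ = tr √(A Aᴴ)`. -/
noncomputable def traceNorm {n : Type*} [Fintype n] [DecidableEq n] (A : Matrix n n ℂ) : ℝ :=
  (psdSqrt (A * Aᴴ)).trace.re

/-- The fidelity `F(A,B) = ‖√A √B‖₁²` between positive semidefinite matrices. -/
noncomputable def fidelity {n : Type*} [Fintype n] [DecidableEq n] (A B : Matrix n n ℂ) : ℝ :=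
  traceNorm (psdSqrt A * psdSqrt B) ^ 2

/-- The Choi matrix `J(Φ) = (1/n) Σ_{j,k} E_{jk} ⊗ Φ(E_{jk})` of a map on matrices. -/
noncomputable def choi {n m : Type*} [Fintype n] [DecidableEq n] [Fintype m]
    (Φ : Matrix n n ℂ → Matrix m m ℂ) : Matrix (n × m) (n × m) ℂ :=
  (Fintype.card n : ℂ)⁻¹ • ∑ j : n, ∑ k : n,
    (Matrix.single j k (1 : ℂ)) ⊗ₖ Φ (Matrix.single j k (1 : ℂ))

/-- The extension `(id_F ⊗ Φ)` of a map on matrices by an ancilla of dimension `F`. -/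
def tensorExt (F : ℕ) {n m : Type*} (Φ : Matrix n n ℂ → Matrix m m ℂ)
    (ρ : Matrix (Fin F × n) (Fin F × n) ℂ) : Matrix (Fin F × m) (Fin F × m) ℂ :=
  Matrix.of fun p q => Φ (Matrix.of fun i j => ρ (p.1, i) (q.1, j)) p.2 q.2

/-- The diamond norm `‖Φ‖◇`: the supremum of `‖(id_F ⊗ Φ)(ρ)‖₁` over all finite ancilla
dimensions `F` and density matrices `ρ`. -/
noncomputable def diamondNorm {n m : Type*} [Fintype n] [DecidableEq n] [Fintype m]
    [DecidableEq m] (Φ : Matrix n n ℂ → Matrix m m ℂ) : ℝ :=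
  sSup { x : ℝ | ∃ (F : ℕ) (ρ : Matrix (Fin F × n) (Fin F × n) ℂ),
    ρ.PosSemidef ∧ ρ.trace = 1 ∧ x = traceNorm (tensorExt F Φ ρ) }

noncomputable def Matrix.PosSemidef.sqrt {n : Type*} [Fintype n] [DecidableEq n]
    {A : Matrix n n ℂ} (h : A.PosSemidef) : Matrix n n ℂ :=
  (h.1.eigenvectorUnitary : Matrix n n ℂ) *
    Matrix.diagonal ((↑) ∘ (Real.sqrt ∘ h.1.eigenvalues)) *
    (star h.1.eigenvectorUnitary : Matrix n n ℂ)

open scoped MatrixOrder in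
lemma Matrix.PosSemidef.sqrt_eq_cfcSqrt {n : Type*} [Fintype n] [DecidableEq n]
    {A : Matrix n n ℂ} (h : A.PosSemidef) : h.sqrt = CFC.sqrt A := by
  rw [CFC.sqrt_eq_cfc, cfc_nnreal_eq_real _ A h.nonneg, h.1.cfc_eq]
  simp only [Matrix.PosSemidef.sqrt, IsHermitian.cfc, Real.coe_toNNReal',
    Function.comp_def, Real.coe_sqrt]
  congr 3
  funext i
  rw [max_eq_left (h.eigenvalues_nonneg i)]
  rfl

open scoped MatrixOrder in
lemma Matrix.PosSemidef.posSemidef_sqrt {n : Type*} [Fintype n] [DecidableEq n]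
    {A : Matrix n n ℂ} (h : A.PosSemidef) : h.sqrt.PosSemidef := by
  rw [h.sqrt_eq_cfcSqrt]
  exact (CFC.sqrt_nonneg A).posSemidef

open scoped MatrixOrder in
lemma Matrix.PosSemidef.sqrt_mul_self {n : Type*} [Fintype n] [DecidableEq n]
    {A : Matrix n n ℂ} (h : A.PosSemidef) : h.sqrt * h.sqrt = A := by
  rw [h.sqrt_eq_cfcSqrt]
  exact CFC.sqrt_mul_sqrt_self A h.nonneg

open scoped MatrixOrder in
lemma Matrix.PosSemidef.eq_sqrt_of_sq_eq {n : Type*} [Fintype n] [DecidableEq n]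
    {A B : Matrix n n ℂ} (hA : A.PosSemidef) (hB : B.PosSemidef) (hAB : A ^ 2 = B) :
    A = hB.sqrt := by
  rw [hB.sqrt_eq_cfcSqrt]
  exact (CFC.sqrt_unique (by rw [← hAB, pow_two]) hA.nonneg).symm

/-- If `A B = 0` for positive semidefinite `A`, `B`, then `√A √B = 0`. -/
lemma sqrt_mul_sqrt_eq_zero {n : Type*} [Fintype n] [DecidableEq n]
    {A B : Matrix n n ℂ} (hA : A.PosSemidef) (hB : B.PosSemidef) (hAB : A * B = 0) :
    hA.sqrt * hB.sqrt = 0 := by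
  have h1 : (hA.sqrt * hB.sqrt)ᴴ * (hA.sqrt * hB.sqrt) = hB.sqrt * A * hB.sqrt := by
    rw [conjTranspose_mul, hA.posSemidef_sqrt.isHermitian.eq,
      hB.posSemidef_sqrt.isHermitian.eq, mul_assoc, ← mul_assoc hA.sqrt, hA.sqrt_mul_self,
      ← mul_assoc]
  have h2 : (hB.sqrt * A * hB.sqrt) * (hB.sqrt * A * hB.sqrt) = 0 := by
    calc hB.sqrt * A * hB.sqrt * (hB.sqrt * A * hB.sqrt)
        = hB.sqrt * ((A * (hB.sqrt * hB.sqrt)) * (A * hB.sqrt)) := by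
          simp only [Matrix.mul_assoc]
      _ = hB.sqrt * ((A * B) * (A * hB.sqrt)) := by rw [hB.sqrt_mul_self]
      _ = 0 := by rw [hAB]; simp
  have hherm : (hB.sqrt * A * hB.sqrt)ᴴ = hB.sqrt * A * hB.sqrt := by
    simp only [conjTranspose_mul, hA.isHermitian.eq, hB.posSemidef_sqrt.isHermitian.eq,
      mul_assoc]
  have h3 : hB.sqrt * A * hB.sqrt = 0 := by
    refine conjTranspose_mul_self_eq_zero.mp ?_
    rw [hherm, h2]
  refine conjTranspose_mul_self_eq_zero.mp ?_
  rw [h1, h3]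

/-- For a finite family of mutually orthogonal Hermitian matrices,
the trace norm of the sum is the sum of the trace norms. -/
theorem traceNorm_sum_of_orthogonal {n S : Type*} [Fintype n] [DecidableEq n] [Fintype S]
    (M : S → Matrix n n ℂ) (hHerm : ∀ j, (M j).IsHermitian)
    (hOrth : ∀ j k, j ≠ k → M j * M k = 0) :
    traceNorm (∑ j, M j) = ∑ j, traceNorm (M j) := by
  have hP : ∀ j, (M j * (M j)ᴴ).PosSemidef := fun j => posSemidef_self_mul_conjTranspose _
  -- orthogonality of the squares
  have hsq_orth : ∀ j k, j ≠ k → (M j * (M j)ᴴ) * (M k * (M k)ᴴ) = 0 := by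
    intro j k hjk
    rw [(hHerm j).eq, (hHerm k).eq, mul_assoc, ← mul_assoc (M j) (M k), hOrth j k hjk]
    simp
  -- the square roots are mutually orthogonal
  have hs_orth : ∀ j k, j ≠ k → (hP j).sqrt * (hP k).sqrt = 0 := fun j k hjk =>
    sqrt_mul_sqrt_eq_zero (hP j) (hP k) (hsq_orth j k hjk)
  set T : Matrix n n ℂ := ∑ j, (hP j).sqrt with hT
  have hTpsd : T.PosSemidef := by
    rw [hT]
    refine Finset.sum_induction _ _ (fun a b ha hb => ha.add hb) Matrix.PosSemidef.zero ?_
    exact fun j _ => (hP j).posSemidef_sqrt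
  have hsum : (∑ j, M j) * (∑ j, M j)ᴴ = ∑ j, M j * (M j)ᴴ := by
    rw [conjTranspose_sum, Finset.sum_mul_sum]
    rw [Finset.sum_comm]
    refine Finset.sum_congr rfl fun j _ => ?_
    rw [Finset.sum_eq_single j]
    · intro k _ hkj
      rw [(hHerm j).eq, hOrth k j hkj]
    · intro h; exact absurd (Finset.mem_univ j) h
  have hPsum : ((∑ j, M j) * (∑ j, M j)ᴴ).PosSemidef := posSemidef_self_mul_conjTranspose _
  have hT2 : T ^ 2 = (∑ j, M j) * (∑ j, M j)ᴴ := by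
    rw [hsum, pow_two, hT, Finset.sum_mul_sum, Finset.sum_comm]
    refine Finset.sum_congr rfl fun j _ => ?_
    rw [Finset.sum_eq_single j]
    · exact (hP j).sqrt_mul_self
    · intro k _ hkj; exact hs_orth k j hkj
    · intro h; exact absurd (Finset.mem_univ j) h
  have hTsqrt : T = hPsum.sqrt := hTpsd.eq_sqrt_of_sq_eq hPsum hT2
  have hpsd_eq : ∀ (A : Matrix n n ℂ) (h : A.PosSemidef), psdSqrt A = h.sqrt := by
    intro A h
    simp only [psdSqrt]
    rw [dif_pos h]
    rfl
  rw [traceNorm, hpsd_eq _ hPsum, ← hTsqrt, hT, trace_sum, Complex.re_sum]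
  exact Finset.sum_congr rfl fun j _ => by rw [traceNorm, hpsd_eq _ (hP j)]
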